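/- Let P be a finite set of points in Euclidean space ℝ^n, let C be a finite set of centers in ℝ^n, and let μ : C → ℕ be target fiber sizes with ∑_{x∈C} μ_x = |P|, where at least one assignment with fiber sizes μ exists. If f : P → C has minimum cost ∑_{y∈P} ‖y − f(y)‖² among all assignments with fiber sizes μ, then there exist weights w : C → ℝ such that f is consistent with the power diagram P(C,w), i.e., for every y ∈ P and every x ∈ C, ‖y − f(y)‖² − w_{f(y)} ≤ ‖y − x‖² − w_x. -/

import Mathlib

open Finset
open scoped Classical

namespace PowerDiagramAux

variable {α : Type*}

/-- fiber of `f` over `x` inside `P` -/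
noncomputable def fib (P : Finset α) (f : α → α) (x : α) : Finset α :=
  P.filter (fun y => f y = x)

/-- edge cost of moving one best resident of `x`'s fiber to `x'` -/
noncomputable def dd (P : Finset α) (f : α → α) (c : α → α → ℝ) (x x' : α) : ℝ :=
  if h : (fib P f x).Nonempty then (fib P f x).inf' h (fun y => c y x' - c y x) else 0

variable {P C : Finset α} {f : α → α} {c : α → α → ℝ}

theorem dd_le {y x x' : α} (hy : y ∈ P) (hyx : f y = x) :
    dd P f c x x' ≤ c y x' - c y x := by
  have hm : y ∈ fib P f x := by simp [fib, hy, hyx]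
  rw [dd, dif_pos ⟨y, hm⟩]
  exact Finset.inf'_le _ hm

theorem dd_exists {x : α} (h : (fib P f x).Nonempty) (x' : α) :
    ∃ y ∈ fib P f x, dd P f c x x' = c y x' - c y x := by
  obtain ⟨y, hy, hval⟩ := Finset.exists_mem_eq_inf' h (fun y => c y x' - c y x)
  exact ⟨y, hy, by rw [dd, dif_pos h]; exact hval⟩

/-- path cost of a list of centers -/
noncomputable def ecost (P : Finset α) (f : α → α) (c : α → α → ℝ) : List α → ℝ
  | [] => 0
  | [_] => 0
  | x :: y :: t => dd P f c x y + ecost P f c (y :: t)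

theorem ecost_eq_sum (d : α) : ∀ L : List α,
    ecost P f c L = ∑ i ∈ Finset.range (L.length - 1), dd P f c (L.getD i d) (L.getD (i+1) d)
  | [] => by simp [ecost]
  | [x] => by simp [ecost]
  | x :: y :: t => by
    rw [ecost, ecost_eq_sum d (y :: t)]
    have hlen : (x :: y :: t).length - 1 = ((y :: t).length - 1) + 1 := by simp
    rw [hlen, Finset.sum_range_succ']
    simp only [List.getD_cons_succ, List.getD_cons_zero]
    ring

theorem ecost_concat {L : List α} {x : α} (h : L.getLast? = some x) (b : α) :
    ecost P f c (L ++ [b]) = ecost P f c L + dd P f c x b := by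
  induction L with
  | nil => simp at h
  | cons a t ih =>
    cases t with
    | nil =>
      simp only [List.getLast?_singleton, Option.some.injEq] at h
      subst h
      simp [ecost]
    | cons a' t' =>
      have h' : (a' :: t').getLast? = some x := by
        rwa [List.getLast?_cons_cons] at h
      have := ih h'
      simp only [List.cons_append] at *
      rw [ecost, ecost, this]
      ring

theorem ecost_split : ∀ (a : List α) (v : α) (b : List α),
    ecost P f c (a ++ v :: b) = ecost P f c (a ++ [v]) + ecost P f c (v :: b)
  | [], v, b => by simp [ecost]
  | [u], v, b => by simp [ecost]
  | u :: u' :: t, v, b => by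
    have := ecost_split (u' :: t) v b
    simp only [List.cons_append] at *
    rw [ecost, ecost, this]
    ring

end PowerDiagramAux

namespace PowerDiagramAux
variable {α : Type*} {P C : Finset α} {f : α → α} {c : α → α → ℝ}

/-- The swap/exchange lemma: rotating residents along a cycle of distinct
centers gives another admissible assignment, so by minimality the total
cost change is nonnegative. -/
theorem swap_nonneg {m : ℕ}
    (hfC : ∀ y ∈ P, f y ∈ C)
    (hmin : ∀ g : α → α, (∀ y ∈ P, g y ∈ C) →
      (∀ x : α, (P.filter fun y => g y = x).card = (P.filter fun y => f y = x).card) →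
      ∑ y ∈ P, c y (f y) ≤ ∑ y ∈ P, c y (g y))
    (x : Fin (m+1) → α) (hinj : Function.Injective x) (hxC : ∀ i, x i ∈ C)
    (y : Fin (m+1) → α) (hyP : ∀ i, y i ∈ P) (hyf : ∀ i, f (y i) = x i) :
    0 ≤ ∑ i, (c (y i) (x (i+1)) - c (y i) (x i)) := by
  have hyinj : Function.Injective y := by
    intro i j hij
    apply hinj
    rw [← hyf i, ← hyf j, hij]
  set Y : Finset α := Finset.image y Finset.univ with hY
  have hYP : Y ⊆ P := by
    intro z hz
    obtain ⟨i, _, rfl⟩ := Finset.mem_image.mp hz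
    exact hyP i
  set g : α → α := fun z => if h : ∃ i, y i = z then x (Classical.choose h + 1) else f z with hg
  have hgy : ∀ i, g (y i) = x (i+1) := by
    intro i
    have h : ∃ j, y j = y i := ⟨i, rfl⟩
    have hj : Classical.choose h = i := hyinj (Classical.choose_spec h)
    simp only [hg, dif_pos h, hj]
  have hgz : ∀ z, z ∉ Y → g z = f z := by
    intro z hz
    have : ¬ ∃ i, y i = z := by
      rintro ⟨i, rfl⟩
      exact hz (Finset.mem_image.mpr ⟨i, Finset.mem_univ i, rfl⟩)
    simp [hg, this]
  have hgC : ∀ z ∈ P, g z ∈ C := by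
    intro z hz
    by_cases h : z ∈ Y
    · obtain ⟨i, _, rfl⟩ := Finset.mem_image.mp h
      rw [hgy i]; exact hxC _
    · rw [hgz z h]; exact hfC z hz
  have hPsplit : P = (P \ Y) ∪ Y := (Finset.sdiff_union_of_subset hYP).symm
  have hdisj : Disjoint (P \ Y) Y := Finset.sdiff_disjoint
  -- cardinalities of fibers agree
  have hcard : ∀ a : α, (P.filter fun z => g z = a).card = (P.filter fun z => f z = a).card := by
    intro a
    have key : ∀ h : α → α, (P.filter fun z => h z = a)
        = ((P \ Y).filter fun z => h z = a) ∪ (Y.filter fun z => h z = a) := by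
      intro h
      rw [← Finset.filter_union, ← hPsplit]
    have hdisj' : ∀ h : α → α, Disjoint ((P \ Y).filter fun z => h z = a)
        (Y.filter fun z => h z = a) := fun h =>
      hdisj.mono (Finset.filter_subset _ _) (Finset.filter_subset _ _)
    rw [key g, key f, Finset.card_union_of_disjoint (hdisj' g),
      Finset.card_union_of_disjoint (hdisj' f)]
    congr 1
    · congr 1
      apply Finset.filter_congr
      intro z hz
      rw [hgz z (Finset.mem_sdiff.mp hz).2]
    · -- counts inside Y
      have himg : ∀ h : α → α, (Y.filter fun z => h z = a)
          = Finset.image y (Finset.univ.filter fun i => h (y i) = a) := by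
        intro h
        rw [hY, Finset.filter_image]
      rw [himg g, himg f, Finset.card_image_of_injective _ hyinj,
        Finset.card_image_of_injective _ hyinj]
      have e1 : (Finset.univ.filter fun i => g (y i) = a)
          = (Finset.univ.filter fun i => x (i+1) = a) := by
        apply Finset.filter_congr; intro i _; rw [hgy i]
      have e2 : (Finset.univ.filter fun i => f (y i) = a)
          = (Finset.univ.filter fun i => x i = a) := by
        apply Finset.filter_congr; intro i _; rw [hyf i]
      rw [e1, e2]
      exact Finset.card_equiv (Equiv.addRight (1 : Fin (m+1))) (fun i => by simp)
  have hmin' := hmin g hgC hcard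
  -- split the two cost sums over (P \ Y) and Y
  have hsum : ∀ h : α → α, ∑ z ∈ P, c z (h z)
      = ∑ z ∈ P \ Y, c z (h z) + ∑ i, c (y i) (h (y i)) := by
    intro h
    calc ∑ z ∈ P, c z (h z) = ∑ z ∈ (P \ Y) ∪ Y, c z (h z) := by rw [← hPsplit]
      _ = ∑ z ∈ P \ Y, c z (h z) + ∑ z ∈ Y, c z (h z) := Finset.sum_union hdisj
      _ = ∑ z ∈ P \ Y, c z (h z) + ∑ i, c (y i) (h (y i)) := by
            rw [hY, Finset.sum_image (fun i _ j _ hij => hyinj hij)]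
  rw [hsum g, hsum f] at hmin'
  have hfs : ∀ z ∈ P \ Y, c z (g z) = c z (f z) := fun z hz => by
    rw [hgz z (Finset.mem_sdiff.mp hz).2]
  rw [Finset.sum_congr rfl hfs] at hmin'
  have : ∑ i, c (y i) (f (y i)) ≤ ∑ i, c (y i) (g (y i)) := by linarith
  have h2 : ∑ i, (c (y i) (x (i+1)) - c (y i) (x i))
      = ∑ i, c (y i) (g (y i)) - ∑ i, c (y i) (f (y i)) := by
    rw [Finset.sum_sub_distrib]
    congr 1 <;> apply Finset.sum_congr rfl <;> intro i _
    · rw [hgy i]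
    · rw [hyf i]
  linarith

end PowerDiagramAux

namespace PowerDiagramAux
variable {α : Type*} {P C : Finset α} {f : α → α} {c : α → α → ℝ}

/-- No negative cycles, `Fin` form. -/
theorem cycFin_nonneg {m : ℕ}
    (hfC : ∀ y ∈ P, f y ∈ C)
    (hmin : ∀ g : α → α, (∀ y ∈ P, g y ∈ C) →
      (∀ x : α, (P.filter fun y => g y = x).card = (P.filter fun y => f y = x).card) →
      ∑ y ∈ P, c y (f y) ≤ ∑ y ∈ P, c y (g y))
    (x : Fin (m+1) → α) (hinj : Function.Injective x) (hxC : ∀ i, x i ∈ C)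
    (hne : ∀ i, (fib P f (x i)).Nonempty) :
    0 ≤ ∑ i, dd P f c (x i) (x (i+1)) := by
  have hch : ∀ i : Fin (m+1), ∃ y ∈ fib P f (x i),
      dd P f c (x i) (x (i+1)) = c y (x (i+1)) - c y (x i) := fun i =>
    dd_exists (hne i) (x (i+1))
  choose y hy hval using hch
  have hyP : ∀ i, y i ∈ P := fun i => (Finset.mem_filter.mp (hy i)).1
  have hyf : ∀ i, f (y i) = x i := fun i => (Finset.mem_filter.mp (hy i)).2
  calc (0:ℝ) ≤ ∑ i, (c (y i) (x (i+1)) - c (y i) (x i)) :=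
        swap_nonneg hfC hmin x hinj hxC y hyP hyf
    _ = ∑ i, dd P f c (x i) (x (i+1)) := by
        apply Finset.sum_congr rfl; intro i _; rw [hval i]

/-- No negative cycles, list form. -/
theorem cycList_nonneg (v : α) (t : List α)
    (hfC : ∀ y ∈ P, f y ∈ C)
    (hmin : ∀ g : α → α, (∀ y ∈ P, g y ∈ C) →
      (∀ x : α, (P.filter fun y => g y = x).card = (P.filter fun y => f y = x).card) →
      ∑ y ∈ P, c y (f y) ≤ ∑ y ∈ P, c y (g y))
    (hnd : (v :: t).Nodup)
    (hmem : ∀ z ∈ v :: t, z ∈ C ∧ (fib P f z).Nonempty) :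
    0 ≤ ecost P f c ((v :: t) ++ [v]) := by
  set m : ℕ := t.length with hm
  set L : List α := v :: t with hL
  have hlen : L.length = m + 1 := by simp [hL, hm]
  set x : Fin (m+1) → α := fun i => L.get (Fin.cast hlen.symm i) with hx
  have hinj : Function.Injective x := by
    intro i j hij
    have h2 := List.nodup_iff_injective_get.mp hnd hij
    have := congrArg Fin.val h2
    simp at this
    exact Fin.ext this
  have hgetmem : ∀ i, x i ∈ L := by
    intro i
    show L.get (Fin.cast hlen.symm i) ∈ L
    exact L.get_mem _
  have key : ecost P f c (L ++ [v]) = ∑ i, dd P f c (x i) (x (i+1)) := by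
    rw [ecost_eq_sum v (L ++ [v])]
    have hlen2 : (L ++ [v]).length - 1 = m + 1 := by simp [hlen]
    rw [hlen2,
      ← Fin.sum_univ_eq_sum_range (fun i => dd P f c ((L ++ [v]).getD i v) ((L ++ [v]).getD (i+1) v)) (m+1)]
    apply Finset.sum_congr rfl
    intro i _
    have hiL : (i : ℕ) < L.length := by rw [hlen]; exact i.isLt
    have e1 : (L ++ [v]).getD i v = x i := by
      rw [List.getD_append _ _ _ _ hiL, List.getD_eq_getElem _ _ hiL]
      simp [hx]
    rw [e1]
    congr 1
    by_cases hlt : (i : ℕ) + 1 < m + 1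
    · have h2 : (i:ℕ) + 1 < L.length := by omega
      rw [List.getD_append _ _ _ _ h2, List.getD_eq_getElem _ _ h2]
      have hlast : i < Fin.last m := by
        rw [Fin.lt_iff_val_lt_val, Fin.val_last]; omega
      have hvadd : ((i + 1 : Fin (m+1))).val = (i:ℕ) + 1 := Fin.val_add_one_of_lt hlast
      simp only [hx]
      congr 1
      exact hvadd.symm
    · have hieq : (i : ℕ) + 1 = m + 1 := by omega
      have hgd : (L ++ [v]).getD ((i:ℕ)+1) v = v := by
        rw [List.getD_append_right _ _ _ _ (by omega), hlen, hieq]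
        simp
      rw [hgd]
      have hilast : i = Fin.last m := by
        apply Fin.ext; rw [Fin.val_last]; omega
      rw [hilast, Fin.last_add_one]
      simp [hx, hL]
  rw [key]
  exact cycFin_nonneg hfC hmin x hinj
    (fun i => (hmem _ (hgetmem i)).1) (fun i => (hmem _ (hgetmem i)).2)

end PowerDiagramAux

namespace PowerDiagramAux
variable {α : Type*} {P C : Finset α} {f : α → α} {c : α → α → ℝ}

/-- all nodup lists with entries in `C`, as a Finset -/
noncomputable def allLists (C : Finset α) : Finset (List α) :=
  (C.toList.sublists.flatMap List.permutations).toFinset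

theorem mem_allLists {C : Finset α} {l : List α} :
    l ∈ allLists C ↔ l.Nodup ∧ ∀ a ∈ l, a ∈ C := by
  rw [allLists, List.mem_toFinset, List.mem_flatMap]
  constructor
  · rintro ⟨s, hs, hl⟩
    rw [List.mem_sublists] at hs
    rw [List.mem_permutations] at hl
    have hsnd : s.Nodup := C.nodup_toList.sublist hs
    refine ⟨hl.symm.nodup hsnd, fun a ha => ?_⟩
    rw [← Finset.mem_toList]
    exact hs.subset (hl.subset ha)
  · rintro ⟨hnd, hsub⟩
    obtain ⟨s, hsp, hss⟩ := hnd.subperm (fun a ha => Finset.mem_toList.mpr (hsub a ha))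
    exact ⟨s, List.mem_sublists.mpr hss, List.mem_permutations.mpr hsp.symm⟩

noncomputable def WalksTo (P C : Finset α) (f : α → α) (x : α) : Finset (List α) :=
  (allLists C).filter (fun l => l.getLast? = some x ∧ ∀ a ∈ l.dropLast, (fib P f a).Nonempty)

theorem walksTo_nonempty {x : α} (hx : x ∈ C) : (WalksTo P C f x).Nonempty := by
  refine ⟨[x], ?_⟩
  rw [WalksTo, Finset.mem_filter, mem_allLists]
  simp [hx]

noncomputable def pot (P C : Finset α) (f : α → α) (c : α → α → ℝ) (x : α) : ℝ :=
  if h : x ∈ C then (WalksTo P C f x).inf' (walksTo_nonempty h) (ecost P f c) else 0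

theorem pot_le
    (hfC : ∀ y ∈ P, f y ∈ C)
    (hmin : ∀ g : α → α, (∀ y ∈ P, g y ∈ C) →
      (∀ x : α, (P.filter fun y => g y = x).card = (P.filter fun y => f y = x).card) →
      ∑ y ∈ P, c y (f y) ≤ ∑ y ∈ P, c y (g y))
    {x x' : α} (hx : x ∈ C) (hfib : (fib P f x).Nonempty) (hx' : x' ∈ C) :
    pot P C f c x' ≤ pot P C f c x + dd P f c x x' := by
  rw [pot, pot, dif_pos hx, dif_pos hx']
  obtain ⟨l, hlmem, hlval⟩ := Finset.exists_mem_eq_inf' (walksTo_nonempty hx) (ecost P f c)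
  rw [WalksTo, Finset.mem_filter, mem_allLists] at hlmem
  obtain ⟨⟨hnd, hsubC⟩, hlast, hdrop⟩ := hlmem
  have hlnil : l ≠ [] := by rintro rfl; simp at hlast
  have hgl : l.getLast hlnil = x := by
    have := List.getLast?_eq_getLast hlnil
    rw [hlast] at this
    exact (Option.some.injEq _ _ ▸ this.symm)
  have hall : ∀ z ∈ l, (fib P f z).Nonempty := by
    intro z hz
    rw [← List.dropLast_append_getLast hlnil, List.mem_append] at hz
    rcases hz with hz | hz
    · exact hdrop z hz
    · rw [List.mem_singleton] at hz
      rw [hz, hgl]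
      exact hfib
  rw [hlval]
  by_cases hx'l : x' ∈ l
  · -- x' occurs on the walk: split off the cycle
    obtain ⟨a, b, rfl⟩ := List.append_of_mem hx'l
    have sub1 : List.Sublist (a ++ [x']) (a ++ x' :: b) :=
      ((List.nil_sublist b).cons₂ x').append_left a
    have sub2 : List.Sublist (x' :: b) (a ++ x' :: b) := List.sublist_append_right a (x' :: b)
    have hlast2 : (x' :: b).getLast? = some x := by
      rw [← hlast, List.getLast?_append_of_ne_nil a (List.cons_ne_nil x' b)]
    have hcyc : 0 ≤ ecost P f c ((x' :: b) ++ [x']) := by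
      apply cycList_nonneg x' b hfC hmin (hnd.sublist sub2)
      intro z hz
      exact ⟨hsubC z (sub2.subset hz), hall z (sub2.subset hz)⟩
    rw [ecost_concat hlast2 x'] at hcyc
    have hmem1 : (a ++ [x']) ∈ WalksTo P C f x' := by
      rw [WalksTo, Finset.mem_filter, mem_allLists]
      refine ⟨⟨hnd.sublist sub1, fun z hz => hsubC z (sub1.subset hz)⟩,
        List.getLast?_concat, ?_⟩
      rw [List.dropLast_concat]
      intro z hz
      exact hall z (sub1.subset (List.mem_append_left [x'] hz))
    have h1 : (WalksTo P C f x').inf' (walksTo_nonempty hx') (ecost P f c)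
        ≤ ecost P f c (a ++ [x']) := Finset.inf'_le _ hmem1
    have h2 : ecost P f c (a ++ x' :: b)
        = ecost P f c (a ++ [x']) + ecost P f c (x' :: b) := ecost_split a x' b
    linarith
  · -- x' fresh: extend the walk
    have hmem1 : (l ++ [x']) ∈ WalksTo P C f x' := by
      rw [WalksTo, Finset.mem_filter, mem_allLists]
      refine ⟨⟨?_, ?_⟩, List.getLast?_concat, ?_⟩
      · rw [List.nodup_append]
        refine ⟨hnd, List.nodup_singleton x', ?_⟩
        intro z hz b hb heq
        rw [List.mem_singleton] at hb
        exact hx'l (by rw [← hb, ← heq]; exact hz)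
      · intro z hz
        rw [List.mem_append, List.mem_singleton] at hz
        rcases hz with hz | rfl
        · exact hsubC z hz
        · exact hx'
      · rw [List.dropLast_concat]
        exact hall
    have h1 : (WalksTo P C f x').inf' (walksTo_nonempty hx') (ecost P f c)
        ≤ ecost P f c (l ++ [x']) := Finset.inf'_le _ hmem1
    rw [ecost_concat hlast x'] at h1
    linarith

theorem main
    (hfC : ∀ y ∈ P, f y ∈ C)
    (hmin : ∀ g : α → α, (∀ y ∈ P, g y ∈ C) →
      (∀ x : α, (P.filter fun y => g y = x).card = (P.filter fun y => f y = x).card) →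
      ∑ y ∈ P, c y (f y) ≤ ∑ y ∈ P, c y (g y)) :
    ∃ w : α → ℝ, ∀ y ∈ P, ∀ x ∈ C, c y (f y) - w (f y) ≤ c y x - w x := by
  refine ⟨pot P C f c, fun y hy x hx => ?_⟩
  have hc : f y ∈ C := hfC y hy
  have hfib : (fib P f (f y)).Nonempty := ⟨y, by simp [fib, hy]⟩
  have h1 := pot_le hfC hmin hc hfib hx
  have h2 : dd P f c (f y) x ≤ c y x - c y (f y) := dd_le hy rfl
  linarith

end PowerDiagramAux

/-- If an assignment `f` has minimum cost (sum of squared Euclidean distances) among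
all assignments with fiber sizes `μ`, then there exist weights `w` such that `f` is
consistent with the power diagram of `(C, w)`. -/
theorem stmt_1 {n : ℕ} (P C : Finset (EuclideanSpace ℝ (Fin n)))
    (μ : EuclideanSpace ℝ (Fin n) → ℕ) (hμ : ∑ x ∈ C, μ x = P.card)
    (hex : ∃ f₀ : EuclideanSpace ℝ (Fin n) → EuclideanSpace ℝ (Fin n),
      (∀ y ∈ P, f₀ y ∈ C) ∧ ∀ x ∈ C, (P.filter fun y => f₀ y = x).card = μ x)
    (f : EuclideanSpace ℝ (Fin n) → EuclideanSpace ℝ (Fin n))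
    (hfC : ∀ y ∈ P, f y ∈ C)
    (hf : ∀ x ∈ C, (P.filter fun y => f y = x).card = μ x)
    (hmin : ∀ g : EuclideanSpace ℝ (Fin n) → EuclideanSpace ℝ (Fin n),
      (∀ y ∈ P, g y ∈ C) →
      (∀ x ∈ C, (P.filter fun y => g y = x).card = μ x) →
      ∑ y ∈ P, ‖y - f y‖ ^ 2 ≤ ∑ y ∈ P, ‖y - g y‖ ^ 2) :
    ∃ w : EuclideanSpace ℝ (Fin n) → ℝ,
      ∀ y ∈ P, ∀ x ∈ C, ‖y - f y‖ ^ 2 - w (f y) ≤ ‖y - x‖ ^ 2 - w x := by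
  exact PowerDiagramAux.main (c := fun y x => ‖y - x‖ ^ 2) hfC
    (fun g hgC hgcard => hmin g hgC (fun x hx => by rw [← hf x hx]; convert hgcard x))
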